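/- Assume a ∼_φ b and let λ ∈ 𝒜. Then: (i) there is no infinite chain λ = μ⁰ → μ¹ → μ² → ⋯ under O'Hara's step relation; (ii) any two maximal rewrite sequences from λ end at the same partition, denoted ψ(λ); and (iii) ψ(λ) ∈ ℬ and |ψ(λ)| = |λ|. -/

import Mathlib

open scoped BigOperators

/-- The size `|λ| = Σ_i i·m_i(λ)` of a partition, identified with its
multiplicity function (a finitely supported function `ℕ+ →₀ ℕ`). -/
def psize (lam : ℕ+ →₀ ℕ) : ℕ := lam.sum fun i m => (i : ℕ) * m

/-- `λ ∈ 𝒜`: every multiplicity satisfies `m_i(λ) < a_i`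
(automatic when `a_i = ∞`). -/
def InA (a : ℕ+ → ℕ∞) (lam : ℕ+ →₀ ℕ) : Prop := ∀ i, (lam i : ℕ∞) < a i

/-- `a ∼_φ b` : the sequences `a, b` take values in `{1,2,…} ∪ {∞}`,
`φ` is a bijection from `supp(a) = {i : a_i < ∞}` onto `supp(b) = {j : b_j < ∞}`,
and `i·a_i = φ(i)·b_{φ(i)}` for all `i ∈ supp(a)`. -/
def PhiEquiv (a b : ℕ+ → ℕ∞) (phi : ℕ+ → ℕ+) : Prop :=
  (∀ i, a i ≠ 0) ∧ (∀ i, b i ≠ 0) ∧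
  Set.BijOn phi {i | a i ≠ ⊤} {j | b j ≠ ⊤} ∧
  (∀ i, a i ≠ ⊤ → ((i : ℕ) : ℕ∞) * a i = ((phi i : ℕ) : ℕ∞) * b (phi i))

/-- One step `μ → μ'` of O'Hara's algorithm: for some `j ∈ supp(b)` with
`m_j(μ) ≥ b_j`, remove `b_j` parts equal to `j` and add `a_i` parts equal to
`i`, where `i = φ⁻¹(j)`. -/
def OStep (a b : ℕ+ → ℕ∞) (phi : ℕ+ → ℕ+) (mu mu' : ℕ+ →₀ ℕ) : Prop :=
  ∃ i j : ℕ+, phi i = j ∧ a i ≠ ⊤ ∧ b j ≠ ⊤ ∧ b j ≤ (mu j : ℕ∞) ∧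
    ∀ l, mu' l = mu l + (if l = i then (a i).toNat else 0)
                      - (if l = j then (b j).toNat else 0)

section OharaAux

open Relation

variable {a b : ℕ+ → ℕ∞} {phi : ℕ+ → ℕ+}

/-! ### ℕ∞ helpers -/

lemma toNat_le_of_le {x : ℕ∞} {n : ℕ} (hx : x ≤ (n : ℕ∞)) : x.toNat ≤ n := by
  have hxt : x ≠ ⊤ := fun h => by simp [h] at hx
  lift x to ℕ using hxt
  simpa using hx

lemma one_le_toNat {x : ℕ∞} (h0 : x ≠ 0) (ht : x ≠ ⊤) : 1 ≤ x.toNat := by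
  lift x to ℕ using ht
  simpa [Nat.one_le_iff_ne_zero] using h0

lemma lt_toNat_of_lt {m : ℕ} {x : ℕ∞} (hlt : (m : ℕ∞) < x) (hx : x ≠ ⊤) : m < x.toNat := by
  lift x to ℕ using hx
  simpa using hlt

/-- the weight identity `i·aᵢ = φ(i)·b_{φ(i)}` in `ℕ`. -/
lemma weight_eq (h : PhiEquiv a b phi) {i : ℕ+} (hai : a i ≠ ⊤) :
    (i : ℕ) * (a i).toNat = ((phi i : ℕ)) * (b (phi i)).toNat := by
  have hbi : b (phi i) ≠ ⊤ := h.2.2.1.mapsTo hai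
  have hw := h.2.2.2 i hai
  lift a i to ℕ using hai with A hA
  lift b (phi i) to ℕ using hbi with B hB
  rw [← Nat.cast_mul, ← Nat.cast_mul] at hw
  exact_mod_cast hw

/-! ### one-step facts -/

lemma step_balance {mu mu' : ℕ+ →₀ ℕ} {i j : ℕ+} {A S : ℕ} (hS : S ≤ mu j)
    (heq : ∀ l, mu' l = mu l + (if l = i then A else 0) - (if l = j then S else 0)) :
    ∀ l, mu' l + (if l = j then S else 0) = mu l + (if l = i then A else 0) := by
  intro l
  have hl := heq l
  have hS' : (if l = j then S else 0) ≤ mu l + (if l = i then A else 0) := by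
    by_cases hlj : l = j
    · subst hlj
      rw [if_pos rfl]
      omega
    · rw [if_neg hlj]
      omega
  omega

lemma single_apply' (i l : ℕ+) (A : ℕ) :
    (Finsupp.single i A) l = if l = i then A else 0 := by
  rw [Finsupp.single_apply]
  by_cases h : i = l
  · subst h; rfl
  · rw [if_neg h, if_neg (fun e => h e.symm)]

lemma sub_add_apply (mu : ℕ+ →₀ ℕ) (i j : ℕ+) (A S : ℕ) (l : ℕ+) :
    (mu + Finsupp.single i A - Finsupp.single j S) l
      = mu l + (if l = i then A else 0) - (if l = j then S else 0) := by
  rw [Finsupp.tsub_apply, Finsupp.add_apply, single_apply', single_apply']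

lemma ostep_mk {mu : ℕ+ →₀ ℕ} {i j : ℕ+} (hphi : phi i = j) (hai : a i ≠ ⊤)
    (hbj : b j ≠ ⊤) (hle : b j ≤ (mu j : ℕ∞)) :
    OStep a b phi mu (mu + Finsupp.single i (a i).toNat - Finsupp.single j (b j).toNat) :=
  ⟨i, j, hphi, hai, hbj, hle, fun l => sub_add_apply mu i j _ _ l⟩

/-- `psize` is preserved by a step. -/
lemma ostep_psize (h : PhiEquiv a b phi) {mu mu' : ℕ+ →₀ ℕ}
    (hs : OStep a b phi mu mu') : psize mu' = psize mu := by
  obtain ⟨i, j, hphi, hai, hbj, hle, heq⟩ := hs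
  set A := (a i).toNat with hA
  set S := (b j).toNat with hSdef
  have hS : S ≤ mu j := toNat_le_of_le hle
  have hw : (i : ℕ) * A = (j : ℕ) * S := by
    have := weight_eq h hai
    rwa [hphi] at this
  have hbal := step_balance hS heq
  classical
  set s : Finset ℕ+ := (mu.support ∪ mu'.support) ∪ {i, j} with hs
  have hmus : mu.support ⊆ s := by
    intro x hx; simp [hs, hx]
  have hmus' : mu'.support ⊆ s := by
    intro x hx; simp [hs, hx]
  have hjs : j ∈ s := by simp [hs]
  have his : i ∈ s := by simp [hs]
  have e1 : psize mu = ∑ l ∈ s, (l : ℕ) * mu l :=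
    Finsupp.sum_of_support_subset _ hmus _ (by intros; simp)
  have e2 : psize mu' = ∑ l ∈ s, (l : ℕ) * mu' l :=
    Finsupp.sum_of_support_subset _ hmus' _ (by intros; simp)
  have key : (∑ l ∈ s, (l : ℕ) * mu' l) + (j : ℕ) * S
      = (∑ l ∈ s, (l : ℕ) * mu l) + (i : ℕ) * A := by
    have h1 : (∑ l ∈ s, if l = j then (l : ℕ) * S else 0) = (j : ℕ) * S := by
      rw [Finset.sum_ite_eq' s j (fun l => (l : ℕ) * S)]
      rw [if_pos hjs]
    have h2 : (∑ l ∈ s, if l = i then (l : ℕ) * A else 0) = (i : ℕ) * A := by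
      rw [Finset.sum_ite_eq' s i (fun l => (l : ℕ) * A)]
      rw [if_pos his]
    rw [← h1, ← h2, ← Finset.sum_add_distrib, ← Finset.sum_add_distrib]
    refine Finset.sum_congr rfl fun l _ => ?_
    have hb := hbal l
    have e3 : (l : ℕ) * mu' l + (if l = j then (l : ℕ) * S else 0)
        = (l : ℕ) * (mu' l + if l = j then S else 0) := by
      split_ifs <;> ring
    have e4 : (l : ℕ) * mu l + (if l = i then (l : ℕ) * A else 0)
        = (l : ℕ) * (mu l + if l = i then A else 0) := by
      split_ifs <;> ring
    rw [e3, e4, hb]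
  rw [e1, e2]
  omega

lemma rtg_psize (h : PhiEquiv a b phi) {mu nu : ℕ+ →₀ ℕ}
    (hr : Relation.ReflTransGen (OStep a b phi) mu nu) : psize nu = psize mu := by
  induction hr with
  | refl => rfl
  | tail _ hstep ih => rw [ostep_psize h hstep, ih]

/-- A normal form admits no step. -/
lemma normal_no_step {mu nu : ℕ+ →₀ ℕ} (hmu : InA b mu) : ¬ OStep a b phi mu nu := by
  rintro ⟨i, j, -, -, -, hle, -⟩
  exact absurd (lt_of_lt_of_le (hmu j) hle) (lt_irrefl _)

lemma normal_rtg {mu nu : ℕ+ →₀ ℕ} (hmu : InA b mu)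
    (hr : Relation.ReflTransGen (OStep a b phi) mu nu) : nu = mu := by
  rcases hr.cases_head with h | ⟨c, hc, -⟩
  · exact h.symm
  · exact absurd hc (normal_no_step hmu)

/-- Local confluence (strong diamond). -/
lemma ostep_diamond (h : PhiEquiv a b phi) :
    ∀ mu mu1 mu2 : ℕ+ →₀ ℕ, OStep a b phi mu mu1 → OStep a b phi mu mu2 →
      ∃ d, Relation.ReflGen (OStep a b phi) mu1 d ∧
        Relation.ReflTransGen (OStep a b phi) mu2 d := by
  rintro mu mu1 mu2 ⟨i1, j1, hp1, ha1, hb1, hle1, heq1⟩ ⟨i2, j2, hp2, ha2, hb2, hle2, heq2⟩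
  by_cases hj : j1 = j2
  · -- same step
    have hi : i1 = i2 := by
      apply h.2.2.1.injOn ha1 ha2
      rw [hp1, hp2, hj]
    have hmueq : mu1 = mu2 := by
      ext l
      rw [heq1 l, heq2 l, hi, hj]
    subst hmueq
    exact ⟨mu1, Relation.ReflGen.refl, Relation.ReflTransGen.refl⟩
  · -- different removal sizes: the two steps commute
    set A1 := (a i1).toNat
    set S1 := (b j1).toNat
    set A2 := (a i2).toNat
    set S2 := (b j2).toNat
    have hS1 : S1 ≤ mu j1 := toNat_le_of_le hle1
    have hS2 : S2 ≤ mu j2 := toNat_le_of_le hle2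
    have hle2' : b j2 ≤ (mu1 j2 : ℕ∞) := by
      refine le_trans hle2 ?_
      have hmono : mu j2 ≤ mu1 j2 := by
        have hh := heq1 j2
        rw [if_neg (show ¬ (j2 = j1) from fun e => hj e.symm)] at hh
        omega
      exact_mod_cast hmono
    have hle1' : b j1 ≤ (mu2 j1 : ℕ∞) := by
      refine le_trans hle1 ?_
      have hmono : mu j1 ≤ mu2 j1 := by
        have hh := heq2 j1
        rw [if_neg (show ¬ (j1 = j2) from hj)] at hh
        omega
      exact_mod_cast hmono
    refine ⟨mu1 + Finsupp.single i2 A2 - Finsupp.single j2 S2,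
      Relation.ReflGen.single (ostep_mk hp2 ha2 hb2 hle2'),
      Relation.ReflTransGen.single ?_⟩
    have hstep : OStep a b phi mu2 (mu2 + Finsupp.single i1 A1 - Finsupp.single j1 S1) :=
      ostep_mk hp1 ha1 hb1 hle1'
    have hEq : mu2 + Finsupp.single i1 A1 - Finsupp.single j1 S1
        = mu1 + Finsupp.single i2 A2 - Finsupp.single j2 S2 := by
      ext l
      rw [sub_add_apply, sub_add_apply, heq1 l, heq2 l]
      have hS1' : (if l = j1 then S1 else 0) ≤ mu l + (if l = i1 then A1 else 0) := by
        by_cases hlj : l = j1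
        · subst hlj; rw [if_pos rfl]; omega
        · rw [if_neg hlj]; omega
      have hS2' : (if l = j2 then S2 else 0) ≤ mu l + (if l = i2 then A2 else 0) := by
        by_cases hlj : l = j2
        · subst hlj; rw [if_pos rfl]; omega
        · rw [if_neg hlj]; omega
      omega
    exact hEq ▸ hstep

/-! ### Termination -/

lemma ohara_terminates (h : PhiEquiv a b phi) (lam : ℕ+ →₀ ℕ) (hlam : InA a lam) :
    ¬ ∃ f : ℕ → (ℕ+ →₀ ℕ), f 0 = lam ∧ ∀ k, OStep a b phi (f k) (f (k + 1)) := by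
  classical
  rintro ⟨f, hf0, hstep⟩
  choose I J hphi ha hb hle heq using hstep
  set n := psize lam with hn
  have hps : ∀ t, psize (f t) = n := by
    intro t
    induction t with
    | zero => rw [hf0]
    | succ t ih => rw [ostep_psize h ⟨I t, J t, hphi t, ha t, hb t, hle t, heq t⟩, ih]
  have hsub : ∀ t, (b (J t)).toNat ≤ f t (J t) := fun t => toNat_le_of_le (hle t)
  -- the balance equation
  have balance : ∀ (l : ℕ+) (t : ℕ),
      f t l + (b l).toNat * Nat.count (fun u => J u = l) t
        = lam l + (a l).toNat * Nat.count (fun u => I u = l) t := by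
    intro l t
    induction t with
    | zero => simp [hf0]
    | succ t ih =>
      have hfl := heq t l
      have hsubt := hsub t
      rw [Nat.count_succ, Nat.count_succ]
      rcases eq_or_ne (J t) l with hJl | hJl
      · subst hJl
        rw [if_pos rfl]
        rw [if_pos rfl] at hfl
        rcases eq_or_ne (I t) (J t) with hIl | hIl
        · rw [if_pos hIl]
          rw [if_pos hIl.symm] at hfl
          rw [hIl] at hfl
          simp only [Nat.mul_succ, Nat.add_zero] at hfl ⊢
          omega
        · rw [if_neg hIl]
          rw [if_neg (show ¬ (J t = I t) from fun e => hIl e.symm)] at hfl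
          simp only [Nat.mul_succ, Nat.add_zero] at hfl ⊢
          omega
      · rw [if_neg hJl, Nat.add_zero]
        rw [if_neg (show ¬ (l = J t) from fun e => hJl e.symm)] at hfl
        rcases eq_or_ne (I t) l with hIl | hIl
        · subst hIl
          rw [if_pos rfl]
          rw [if_pos rfl] at hfl
          simp only [Nat.mul_succ, Nat.add_zero] at hfl ⊢
          omega
        · rw [if_neg hIl, Nat.add_zero]
          rw [if_neg (show ¬ (l = I t) from fun e => hIl e.symm)] at hfl
          simp only [Nat.mul_succ, Nat.add_zero] at hfl ⊢
          omega
  -- every fired part size is bounded by n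
  have hb1 : ∀ t, 1 ≤ (b (J t)).toNat := fun t => one_le_toNat (h.2.1 _) (hb t)
  have hJle : ∀ t, ((J t : ℕ)) ≤ n := by
    intro t
    have h1 : 1 ≤ f t (J t) := le_trans (hb1 t) (hsub t)
    have hmem : J t ∈ (f t).support := Finsupp.mem_support_iff.2 (by omega)
    set F : ℕ+ → ℕ := fun i => (i : ℕ) * f t i with hF
    have h2 : F (J t) ≤ ∑ i ∈ (f t).support, F i :=
      Finset.single_le_sum (fun _ _ => Nat.zero_le _) hmem
    have h3 : psize (f t) = ∑ i ∈ (f t).support, F i := rfl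
    have h4 : (J t : ℕ) ≤ F (J t) := by
      simp only [hF]
      calc (J t : ℕ) = (J t : ℕ) * 1 := (Nat.mul_one _).symm
        _ ≤ (J t : ℕ) * f t (J t) := Nat.mul_le_mul le_rfl h1
    have h5 := hps t
    omega
  -- the set of part sizes fired infinitely often is nonempty, finite, φ-closed
  set JS : Set ℕ+ := {j | {t | J t = j}.Infinite} with hJS
  have hbound_fin : ({j : ℕ+ | (j : ℕ) ≤ n}).Finite := by
    have heqset : ({j : ℕ+ | (j : ℕ) ≤ n}) = ((↑) : ℕ+ → ℕ) ⁻¹' (Set.Iic n) := rfl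
    rw [heqset]
    exact Set.Finite.preimage (Set.injOn_of_injective PNat.coe_injective)
      (Set.finite_Iic n)
  have hJSsub : JS ⊆ {j : ℕ+ | (j : ℕ) ≤ n} := by
    intro j hj
    obtain ⟨t, ht⟩ := hj.nonempty
    exact ht ▸ hJle t
  have hJSfin : JS.Finite := hbound_fin.subset hJSsub
  have hJSne : JS.Nonempty := by
    by_contra hc
    rw [Set.not_nonempty_iff_eq_empty] at hc
    have hfinfib : ∀ j : ℕ+, {t | J t = j}.Finite := by
      intro j
      have hnotin : j ∉ JS := by rw [hc]; exact Set.notMem_empty j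
      exact Set.not_infinite.mp hnotin
    have huniv : (Set.univ : Set ℕ).Finite := by
      have hcover : (Set.univ : Set ℕ) ⊆ ⋃ j ∈ {j : ℕ+ | (j : ℕ) ≤ n}, {t | J t = j} := by
        intro t _
        exact Set.mem_biUnion (hJle t) rfl
      exact Set.Finite.subset (Set.Finite.biUnion hbound_fin fun j _ => hfinfib j) hcover
    exact Set.infinite_univ huniv
  -- removal counts are unbounded on JS
  have hRC_unb : ∀ j ∈ JS, ∀ N, ∃ t, N + 1 ≤ Nat.count (fun u => J u = j) t := by
    intro j hj N
    have hinf : {t | J t = j}.Infinite := hj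
    refine ⟨Nat.nth (fun t => J t = j) N + 1, ?_⟩
    rw [Nat.count_succ, if_pos (Nat.nth_mem_of_infinite hinf N),
      Nat.count_nth_of_infinite hinf N]
  -- JS ⊆ supp a
  have hsuppa : ∀ j ∈ JS, a j ≠ ⊤ := by
    intro j hj hc
    have hACz : ∀ t, Nat.count (fun u => I u = j) t = 0 := by
      intro t
      induction t with
      | zero => rfl
      | succ t ih =>
        rw [Nat.count_succ, ih, if_neg (fun e : I t = j => (ha t) (by rw [e]; exact hc))]
    obtain ⟨t, ht⟩ := hRC_unb j hj (lam j)
    have hbal := balance j t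
    rw [hACz t, Nat.mul_zero, Nat.add_zero] at hbal
    have hb1' : 1 ≤ (b j).toNat := by
      obtain ⟨u, hu⟩ := hj.nonempty
      have := hb1 u
      rwa [show J u = j from hu] at this
    have hge : Nat.count (fun u => J u = j) t
        ≤ (b j).toNat * Nat.count (fun u => J u = j) t :=
      Nat.le_mul_of_pos_left _ (by omega)
    omega
  -- addition counts equal removal counts of the φ-image
  have hACRC : ∀ j : ℕ+, a j ≠ ⊤ → ∀ t,
      Nat.count (fun u => I u = j) t = Nat.count (fun u => J u = phi j) t := by
    intro j hja t
    induction t with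
    | zero => rfl
    | succ t ih =>
      rw [Nat.count_succ, Nat.count_succ, ih]
      congr 1
      by_cases hIu : I t = j
      · rw [if_pos hIu, if_pos (show J t = phi j by rw [← hphi t, hIu])]
      · rw [if_neg hIu, if_neg (show ¬ (J t = phi j) from
          fun e => hIu (h.2.2.1.injOn (ha t) hja (by rw [hphi t, e])))]
  -- φ maps JS into JS
  have hphiJS : ∀ j ∈ JS, phi j ∈ JS := by
    intro j hj
    by_contra hc
    have hfin : {t | J t = phi j}.Finite := Set.not_infinite.mp hc
    set C := hfin.toFinset.card with hC
    have hbd : ∀ t, Nat.count (fun u => J u = phi j) t ≤ C := fun t =>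
      Nat.count_le_card hfin t
    obtain ⟨t, ht⟩ := hRC_unb j hj (lam j + (a j).toNat * C)
    have hbal := balance j t
    rw [hACRC j (hsuppa j hj) t] at hbal
    have hb1' : 1 ≤ (b j).toNat := by
      obtain ⟨u, hu⟩ := hj.nonempty
      have := hb1 u
      rwa [show J u = j from hu] at this
    have hge : Nat.count (fun u => J u = j) t
        ≤ (b j).toNat * Nat.count (fun u => J u = j) t :=
      Nat.le_mul_of_pos_left _ (by omega)
    have hmul : (a j).toNat * Nat.count (fun u => J u = phi j) t ≤ (a j).toNat * C :=
      Nat.mul_le_mul le_rfl (hbd t)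
    omega
  -- the strict fire-time inequality
  set Bw : ℕ+ → ℕ := fun j => (j : ℕ) * (b j).toNat with hBw
  have hfire : ∀ j ∈ JS, ∀ t, J t = j →
      Bw j * (Nat.count (fun u => J u = j) t + 1)
        < Bw (phi j) * (Nat.count (fun u => J u = phi j) t + 1) := by
    intro j hj t htj
    simp only [hBw]
    have hja := hsuppa j hj
    have hlamj : lam j + 1 ≤ (a j).toNat := lt_toNat_of_lt (hlam j) hja
    have hsubt : (b j).toNat ≤ f t j := by
      have := hsub t
      rwa [htj] at this
    have hbal := balance j t
    rw [hACRC j hja t] at hbal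
    have key : (b j).toNat * (Nat.count (fun u => J u = j) t + 1)
        < (a j).toNat * (Nat.count (fun u => J u = phi j) t + 1) := by
      rw [Nat.mul_succ, Nat.mul_succ]
      omega
    have hwj : (j : ℕ) * (a j).toNat = ((phi j : ℕ)) * (b (phi j)).toNat := weight_eq h hja
    calc (j : ℕ) * (b j).toNat * (Nat.count (fun u => J u = j) t + 1)
        = (j : ℕ) * ((b j).toNat * (Nat.count (fun u => J u = j) t + 1)) := by ring
      _ < (j : ℕ) * ((a j).toNat * (Nat.count (fun u => J u = phi j) t + 1)) :=
          (Nat.mul_lt_mul_left j.pos).mpr key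
      _ = ((j : ℕ) * (a j).toNat) * (Nat.count (fun u => J u = phi j) t + 1) := by ring
      _ = ((phi j : ℕ)) * (b (phi j)).toNat * (Nat.count (fun u => J u = phi j) t + 1) := by
          rw [hwj]
  -- lcm of the weights over JS
  set L : ℕ := hJSfin.toFinset.lcm Bw with hL
  have hdvd : ∀ j ∈ JS, Bw j ∣ L := by
    intro j hj
    exact Finset.dvd_lcm (by rwa [Set.Finite.mem_toFinset])
  have hBpos : ∀ j ∈ JS, 0 < Bw j := by
    intro j hj
    have hb1' : 1 ≤ (b j).toNat := by
      obtain ⟨u, hu⟩ := hj.nonempty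
      have := hb1 u
      rwa [show J u = j from hu] at this
    simp only [hBw]
    exact Nat.mul_pos j.pos (by omega)
  have hLpos : 0 < L := by
    rcases Nat.eq_zero_or_pos L with h0 | hpos
    · exfalso
      rw [hL, Finset.lcm_eq_zero_iff] at h0
      obtain ⟨j, hjm, hj0'⟩ := h0
      have hjm' : j ∈ JS := by
        have := hjm
        rw [Set.Finite.mem_toFinset] at this
        exact this
      have := hBpos j hjm'
      omega
    · exact hpos
  obtain ⟨j0, hj0⟩ := hJSne
  -- the chain of sites
  set c : ℕ → ℕ+ := fun r => phi^[r] j0 with hc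
  have hcsucc : ∀ r, c (r + 1) = phi (c r) := fun r => Function.iterate_succ_apply' phi r j0
  have hcJS : ∀ r, c r ∈ JS := by
    intro r
    induction r with
    | zero => exact hj0
    | succ r ih => rw [hcsucc r]; exact hphiJS _ ih
  set X : ℕ → ℕ := fun r => L / Bw (c r) with hX
  have hXB : ∀ r, X r * Bw (c r) = L := fun r => Nat.div_mul_cancel (hdvd _ (hcJS r))
  have hXpos : ∀ r, 0 < X r := by
    intro r
    have h1 := hXB r
    by_contra h0
    push_neg at h0
    have hx0 : X r = 0 := Nat.le_zero.mp h0
    rw [hx0, Nat.zero_mul] at h1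
    omega
  have hdesc : ∀ r, Nat.nth (fun t => J t = c (r + 1)) (X (r + 1) - 1)
      < Nat.nth (fun t => J t = c r) (X r - 1) := by
    intro r
    have hinf : {t | J t = c r}.Infinite := hcJS r
    set t0 := Nat.nth (fun t => J t = c r) (X r - 1) with ht0
    have hmem : J t0 = c r := Nat.nth_mem_of_infinite hinf _
    have hcnt : Nat.count (fun t => J t = c r) t0 = X r - 1 :=
      Nat.count_nth_of_infinite hinf _
    have hkey := hfire (c r) (hcJS r) t0 hmem
    rw [hcnt] at hkey
    have hXr := hXpos r
    have e1 : X r - 1 + 1 = X r := by omega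
    rw [e1, ← hcsucc r] at hkey
    have e2 : Bw (c r) * X r = L := by rw [Nat.mul_comm]; exact hXB r
    rw [e2] at hkey
    have e3 : Bw (c (r + 1)) * X (r + 1) = L := by rw [Nat.mul_comm]; exact hXB (r + 1)
    have hlt : X (r + 1) - 1 < Nat.count (fun t => J t = c (r + 1)) t0 := by
      by_contra hge
      push_neg at hge
      have hge' : Nat.count (fun t => J t = c (r + 1)) t0 + 1 ≤ X (r + 1) := by
        have := hXpos (r + 1)
        omega
      have hmul : Bw (c (r + 1)) * (Nat.count (fun t => J t = c (r + 1)) t0 + 1)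
          ≤ Bw (c (r + 1)) * X (r + 1) := Nat.mul_le_mul le_rfl hge'
      omega
    exact Nat.nth_lt_of_lt_count hlt
  have hmono : ∀ r, Nat.nth (fun t => J t = c r) (X r - 1) + r
      ≤ Nat.nth (fun t => J t = c 0) (X 0 - 1) := by
    intro r
    induction r with
    | zero => omega
    | succ r ih =>
      have := hdesc r
      omega
  have hfinal := hmono (Nat.nth (fun t => J t = c 0) (X 0 - 1) + 1)
  omega

end OharaAux

theorem ohara_termination_confluence (a b : ℕ+ → ℕ∞) (phi : ℕ+ → ℕ+)
    (h : PhiEquiv a b phi) (lam : ℕ+ →₀ ℕ) (hlam : InA a lam) :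
    (¬ ∃ f : ℕ → (ℕ+ →₀ ℕ), f 0 = lam ∧ ∀ k, OStep a b phi (f k) (f (k + 1))) ∧
    (∀ mu mu' : ℕ+ →₀ ℕ,
      Relation.ReflTransGen (OStep a b phi) lam mu → InA b mu →
      Relation.ReflTransGen (OStep a b phi) lam mu' → InA b mu' → mu = mu') ∧
    (∀ mu : ℕ+ →₀ ℕ,
      Relation.ReflTransGen (OStep a b phi) lam mu → InA b mu →
      InA b mu ∧ psize mu = psize lam) := by
  refine ⟨ohara_terminates h lam hlam, ?_, ?_⟩
  · intro mu mu' hr hmu hr' hmu'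
    obtain ⟨d, hd1, hd2⟩ := Relation.church_rosser (ostep_diamond h) hr hr'
    rw [← normal_rtg hmu hd1, ← normal_rtg hmu' hd2]
  · intro mu hr hmu
    exact ⟨hmu, rtg_psize h hr⟩
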